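/- Let d₀, d₁, ν₀, ν₁, e₀, e₁ be functions rational at infinity, with d₀ not identically 0 and d₀ not identically 1. Then there exist functions E₀, E₁, E₂, each rational at infinity and depending only on d₀, d₁, ν₀, ν₁, e₀, e₁, with E₂ not identically zero, such that the following holds: for every domain U contained in an annulus Ω(r) on which d₀, d₁, ν₀, ν₁, e₀, e₁, E₀, E₁, E₂ are all analytic and d₀ and d₀ − 1 have no zeros, and every pair of zero-free analytic functions p, q on U satisfying p′/p = d₀·(q′/q) + d₁ and q″ + ν₁q′ + ν₀q = 0 on U, one has E₂·(p″/p) + E₁·(p′/p) + E₀ = (p′/p)² + e₁·(p′/p) + e₀ on U. -/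

import Mathlib

/-- A function is rational at infinity if it is analytic on some annulus
`Ω(r) = {z : r < |z|}` and has at most polynomial growth there
(equivalently, at most a pole at `∞`). -/
def RationalAtInfinity (a : ℂ → ℂ) : Prop :=
  ∃ r : ℝ, 0 < r ∧ AnalyticOnNhd ℂ a {z : ℂ | r < ‖z‖} ∧
    ∃ (n : ℕ) (C : ℝ), ∀ z : ℂ, r < ‖z‖ →
      ‖a z‖ ≤ C * ‖z‖ ^ n

namespace RAIaux

open Complex Set Filter Metric


lemma mem_ann {r s : ℝ} (h : r ≤ s) {z : ℂ} (hz : z ∈ {w : ℂ | s < ‖w‖}) :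
    z ∈ {w : ℂ | r < ‖w‖} := by
  simp only [Set.mem_setOf_eq] at *; exact lt_of_le_of_lt h hz

lemma ann_lt {s : ℝ} {z : ℂ} (hz : z ∈ {w : ℂ | s < ‖w‖}) : s < ‖z‖ := hz

lemma rai_elim {a : ℂ → ℂ} (ha : RationalAtInfinity a) :
    ∃ r : ℝ, 1 ≤ r ∧ AnalyticOnNhd ℂ a {z : ℂ | r < ‖z‖} ∧
    ∃ (n : ℕ) (C : ℝ), 0 ≤ C ∧ ∀ z : ℂ, r < ‖z‖ →
      ‖a z‖ ≤ C * ‖z‖ ^ n := by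
  obtain ⟨r, hr, han, n, C, hC⟩ := ha
  refine ⟨max r 1, le_max_right _ _, han.mono (fun z hz => mem_ann (le_max_left _ _) hz), n, max C 0, le_max_right _ _,
    fun z hz => ?_⟩
  have h1 : r < ‖z‖ := lt_of_le_of_lt (le_max_left _ _) hz
  refine (hC z h1).trans ?_
  have h2 : (0:ℝ) ≤ ‖z‖ ^ n := by positivity
  exact mul_le_mul_of_nonneg_right (le_max_left _ _) h2

lemma rai_const (c : ℂ) : RationalAtInfinity (fun _ => c) :=
  ⟨1, one_pos, analyticOnNhd_const, 0, ‖c‖, fun z _ => by simp⟩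

lemma rai_mul {a b : ℂ → ℂ} (ha : RationalAtInfinity a) (hb : RationalAtInfinity b) :
    RationalAtInfinity (fun z => a z * b z) := by
  obtain ⟨r₁, hr₁, han₁, n₁, C₁, hC₁0, hC₁⟩ := rai_elim ha
  obtain ⟨r₂, hr₂, han₂, n₂, C₂, hC₂0, hC₂⟩ := rai_elim hb
  refine ⟨max r₁ r₂, lt_of_lt_of_le one_pos ((le_max_left _ _).trans' hr₁), fun z hz =>
    ((han₁ z (mem_ann (le_max_left _ _) hz)).mul
      (han₂ z (mem_ann (le_max_right _ _) hz))), n₁ + n₂, C₁ * C₂, fun z hz => ?_⟩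
  have h1 := hC₁ z (lt_of_le_of_lt (le_max_left _ _) (ann_lt hz))
  have h2 := hC₂ z (lt_of_le_of_lt (le_max_right _ _) (ann_lt hz))
  calc ‖a z * b z‖ = ‖a z‖ * ‖b z‖ := norm_mul _ _
    _ ≤ (C₁ * ‖z‖ ^ n₁) * (C₂ * ‖z‖ ^ n₂) := by
        apply mul_le_mul h1 h2 (norm_nonneg _) (by positivity)
    _ = C₁ * C₂ * ‖z‖ ^ (n₁ + n₂) := by rw [pow_add]; ring

lemma rai_add {a b : ℂ → ℂ} (ha : RationalAtInfinity a) (hb : RationalAtInfinity b) :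
    RationalAtInfinity (fun z => a z + b z) := by
  obtain ⟨r₁, hr₁, han₁, n₁, C₁, hC₁0, hC₁⟩ := rai_elim ha
  obtain ⟨r₂, hr₂, han₂, n₂, C₂, hC₂0, hC₂⟩ := rai_elim hb
  refine ⟨max r₁ r₂, lt_of_lt_of_le one_pos ((le_max_left _ _).trans' hr₁), fun z hz =>
    ((han₁ z (mem_ann (le_max_left _ _) hz)).add
      (han₂ z (mem_ann (le_max_right _ _) hz))), max n₁ n₂, C₁ + C₂, fun z hz => ?_⟩
  have hz1 : (1:ℝ) ≤ ‖z‖ := le_of_lt (lt_of_le_of_lt ((le_max_left _ _).trans' hr₁) (ann_lt hz))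
  have h1 := hC₁ z (lt_of_le_of_lt (le_max_left _ _) (ann_lt hz))
  have h2 := hC₂ z (lt_of_le_of_lt (le_max_right _ _) (ann_lt hz))
  calc ‖a z + b z‖ ≤ ‖a z‖ + ‖b z‖ := by
        exact norm_add_le _ _
    _ ≤ C₁ * ‖z‖ ^ n₁ + C₂ * ‖z‖ ^ n₂ := add_le_add h1 h2
    _ ≤ C₁ * ‖z‖ ^ (max n₁ n₂) + C₂ * ‖z‖ ^ (max n₁ n₂) := by
        have e1 := pow_le_pow_right₀ hz1 (le_max_left n₁ n₂)
        have e2 := pow_le_pow_right₀ hz1 (le_max_right n₁ n₂)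
        have := norm_nonneg z
        nlinarith [pow_nonneg this n₁, pow_nonneg this n₂]
    _ = (C₁ + C₂) * ‖z‖ ^ (max n₁ n₂) := by ring

lemma rai_neg {a : ℂ → ℂ} (ha : RationalAtInfinity a) :
    RationalAtInfinity (fun z => -(a z)) := by
  obtain ⟨r, hr, han, n, C, hC⟩ := ha
  exact ⟨r, hr, han.neg, n, C, fun z hz => by simpa using hC z hz⟩

lemma rai_sub {a b : ℂ → ℂ} (ha : RationalAtInfinity a) (hb : RationalAtInfinity b) :
    RationalAtInfinity (fun z => a z - b z) := by
  simpa [sub_eq_add_neg] using rai_add ha (rai_neg hb)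


lemma rai_deriv {a : ℂ → ℂ} (ha : RationalAtInfinity a) :
    RationalAtInfinity (deriv a) := by
  obtain ⟨r, hr1, han, n, C, hC0, hC⟩ := rai_elim ha
  have hr : (0:ℝ) < r := lt_of_lt_of_le one_pos hr1
  refine ⟨2 * r, by linarith, ?_, n, C * (3/2)^n / r, fun z hz => ?_⟩
  · exact (han.deriv).mono (fun z hz => mem_ann (by linarith) hz)
  · have hz0 : (0:ℝ) < ‖z‖ := lt_trans (by linarith) hz
    have hRpos : (0:ℝ) < ‖z‖ / 2 := by linarith
    have hball : Metric.closedBall z (‖z‖ / 2) ⊆ {w : ℂ | r < ‖w‖} := by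
      intro w hw
      simp only [Metric.mem_closedBall, Complex.dist_eq] at hw
      have h1 : ‖z‖ - ‖w‖ ≤ ‖z - w‖ := by
        simpa using norm_sub_norm_le z w
      have h2 : ‖z - w‖ = ‖w - z‖ := by
        exact norm_sub_rev _ _
      simp only [Set.mem_setOf_eq]
      nlinarith
    have hdiff : DiffContOnCl ℂ a (Metric.ball z (‖z‖ / 2)) := by
      apply DifferentiableOn.diffContOnCl
      apply (han.mono ?_).differentiableOn
      exact (closure_ball_subset_closedBall).trans hball
    have hbound : ∀ w ∈ Metric.sphere z (‖z‖ / 2),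
        ‖a w‖ ≤ C * (3/2)^n * ‖z‖ ^ n := by
      intro w hw
      simp only [Metric.mem_sphere, Complex.dist_eq] at hw
      have hwmem : r < ‖w‖ := hball (by
        simp [Metric.mem_closedBall, Complex.dist_eq, hw.le])
      have hwabs : ‖w‖ ≤ 3/2 * ‖z‖ := by
        have h3 : ‖w‖ - ‖z‖ ≤ ‖w - z‖ := by
          simpa using norm_sub_norm_le w z
        nlinarith
      calc ‖a w‖ ≤ C * ‖w‖ ^ n := hC w hwmem
        _ ≤ C * (3/2 * ‖z‖) ^ n := by
            apply mul_le_mul_of_nonneg_left _ hC0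
            exact pow_le_pow_left₀ (norm_nonneg _) hwabs n
        _ = C * (3/2)^n * ‖z‖ ^ n := by rw [mul_pow]; ring
    have := Complex.norm_deriv_le_of_forall_mem_sphere_norm_le hRpos hdiff hbound
    calc ‖deriv a z‖
        ≤ (C * (3/2)^n * ‖z‖ ^ n) / (‖z‖ / 2) := this
      _ ≤ C * (3/2)^n / r * ‖z‖ ^ n := by
          rw [div_div_eq_mul_div, div_le_iff₀ hz0]
          have h4 : r ≤ ‖z‖ / 2 := by linarith
          have h5 : (0:ℝ) ≤ C * (3/2)^n * ‖z‖ ^ n := by positivity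
          have h6 : C * (3/2)^n / r * ‖z‖ ^ n * ‖z‖
              = C * (3/2)^n * ‖z‖ ^ n * ‖z‖ / r := by ring
          rw [h6, le_div_iff₀ hr]
          nlinarith [pow_nonneg (le_of_lt hz0) n]


lemma rai_inv {a : ℂ → ℂ} (ha : RationalAtInfinity a)
    (hne : ∀ r : ℝ, ∃ z : ℂ, r < ‖z‖ ∧ a z ≠ 0) :
    ∃ R : ℝ, 1 ≤ R ∧ (∀ z : ℂ, R < ‖z‖ → a z ≠ 0) ∧
      RationalAtInfinity (fun z => (a z)⁻¹) := by
  classical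
  obtain ⟨r, hr1, han, n, C, hC0, hC⟩ := rai_elim ha
  have hr : (0:ℝ) < r := lt_of_lt_of_le one_pos hr1
  set s : Set ℂ := Metric.ball (0:ℂ) r⁻¹ with hs
  set f : ℂ → ℂ := fun w => w ^ n * a w⁻¹ with hf
  have hmem : ∀ w : ℂ, w ∈ s → w ≠ 0 → r < ‖w⁻¹‖ := by
    intro w hw1 hw0
    simp only [hs, Metric.mem_ball, Complex.dist_eq, sub_zero] at hw1
    have habs : 0 < ‖w‖ := norm_pos_iff.mpr hw0
    have := inv_strictAnti₀ habs hw1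
    rwa [inv_inv, ← norm_inv] at this
  have hdf : DifferentiableOn ℂ f (s \ {0}) := by
    intro w hw
    have hw0 : w ≠ 0 := hw.2
    have h1 : AnalyticAt ℂ (fun w : ℂ => a w⁻¹) w :=
      (han _ (hmem w hw.1 hw0)).comp (analyticAt_id.inv hw0)
    exact (((analyticAt_id.pow n).mul h1).differentiableAt).differentiableWithinAt
  have hbdd : BddAbove (norm ∘ f '' (s \ {0})) := by
    refine ⟨C, fun x hx => ?_⟩
    obtain ⟨w, hw, rfl⟩ := hx
    have hw0 : w ≠ 0 := hw.2
    have habs : 0 < ‖w‖ := norm_pos_iff.mpr hw0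
    have hb := hC _ (hmem w hw.1 hw0)
    simp only [Function.comp_apply, hf, norm_mul, norm_pow]
    calc ‖w‖ ^ n * ‖a w⁻¹‖
        ≤ ‖w‖ ^ n * (C * ‖w⁻¹‖ ^ n) := by
          exact mul_le_mul_of_nonneg_left hb (by positivity)
      _ = C * (‖w‖ * (‖w‖)⁻¹) ^ n := by
          rw [norm_inv, mul_pow]; ring
      _ = C := by rw [mul_inv_cancel₀ (ne_of_gt habs)]; simp
  have hsnhds : s ∈ nhds (0:ℂ) := Metric.ball_mem_nhds 0 (by positivity)
  set g : ℂ → ℂ := Function.update f 0 (limUnder (nhdsWithin 0 {(0:ℂ)}ᶜ) f) with hg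
  have hgd : DifferentiableOn ℂ g s :=
    Complex.differentiableOn_update_limUnder_of_bddAbove hsnhds hdf hbdd
  have hgan : AnalyticOnNhd ℂ g s := hgd.analyticOnNhd Metric.isOpen_ball
  have hg0 : AnalyticAt ℂ g 0 := hgan 0 (Metric.mem_ball_self (by positivity))
  have hgf : ∀ w : ℂ, w ≠ 0 → g w = f w := fun w hw => Function.update_of_ne hw _ _
  have hnev : ¬ ∀ᶠ w in nhds 0, g w = 0 := by
    intro hev
    have heq : Set.EqOn g 0 s :=
      hgan.eqOn_zero_of_preconnected_of_eventuallyEq_zero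
        (convex_ball 0 r⁻¹).isPreconnected (Metric.mem_ball_self (by positivity)) hev
    obtain ⟨z, hz, hz0⟩ := hne r
    have hzne : z ≠ 0 := by
      intro h; rw [h] at hz; simp at hz; linarith
    have habsz : 0 < ‖z‖ := norm_pos_iff.mpr hzne
    have hwin : z⁻¹ ∈ s := by
      simp only [hs, Metric.mem_ball, Complex.dist_eq, sub_zero, norm_inv]
      exact inv_strictAnti₀ hr hz
    have := heq hwin
    rw [hgf _ (inv_ne_zero hzne)] at this
    simp only [hf, inv_inv, Pi.zero_apply] at this
    rcases mul_eq_zero.mp this with h | h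
    · exact pow_ne_zero n (inv_ne_zero hzne) h
    · exact hz0 h
  obtain ⟨k, h, hhan, hh0, hev⟩ := hg0.exists_eventuallyEq_pow_smul_nonzero_iff.mpr hnev
  have hc0 : 0 < ‖h 0‖ := norm_pos_iff.mpr hh0
  set c : ℝ := ‖h 0‖ / 2 with hcdef
  have hcpos : 0 < c := by positivity
  have hlow : ∀ᶠ w in nhds 0, c ≤ ‖h w‖ := by
    have hcont : ContinuousAt h 0 := hhan.continuousAt
    have : ∀ᶠ w in nhds 0, h w ∈ Metric.ball (h 0) c :=
      hcont (Metric.ball_mem_nhds _ hcpos)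
    filter_upwards [this] with w hw
    simp only [Metric.mem_ball, Complex.dist_eq] at hw
    have h3 : ‖h 0‖ - ‖h w‖ ≤ ‖h 0 - h w‖ := by
      simpa using norm_sub_norm_le (h 0) (h w)
    have h4 : ‖h 0 - h w‖ = ‖h w - h 0‖ := by
      exact norm_sub_rev _ _
    rw [hcdef]; linarith [h4 ▸ h3]
  obtain ⟨δ, hδpos, hδ⟩ := Metric.eventually_nhds_iff.mp (hev.and hlow)
  refine ⟨max (max r δ⁻¹) 1, le_max_right _ _, ?_⟩
  have hkey : ∀ z : ℂ, max (max r δ⁻¹) 1 < ‖z‖ →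
      a z ≠ 0 ∧ ‖(a z)⁻¹‖ ≤ c⁻¹ * ‖z‖ ^ k := by
    intro z hz
    have hz1 : (1:ℝ) < ‖z‖ := lt_of_le_of_lt (le_max_right _ _) hz
    have hzr : r < ‖z‖ := lt_of_le_of_lt ((le_max_left _ _).trans (le_max_left _ _)) hz
    have hzd : δ⁻¹ < ‖z‖ := lt_of_le_of_lt ((le_max_right _ _).trans (le_max_left _ _)) hz
    have hzne : z ≠ 0 := by
      intro hzz; rw [hzz] at hz1; simp at hz1; linarith
    have habsz : 0 < ‖z‖ := norm_pos_iff.mpr hzne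
    have hwd : dist z⁻¹ 0 < δ := by
      simp only [Complex.dist_eq, sub_zero, norm_inv]
      calc (‖z‖)⁻¹ < (δ⁻¹)⁻¹ := inv_strictAnti₀ (by positivity) hzd
        _ = δ := inv_inv δ
    obtain ⟨hgw, hlw⟩ := hδ hwd
    rw [hgf _ (inv_ne_zero hzne)] at hgw
    simp only [hf, inv_inv, sub_zero, smul_eq_mul] at hgw
    -- hgw : (z⁻¹) ^ n * a z = (z⁻¹) ^ k * h (z⁻¹)
    have hwne : (z⁻¹ : ℂ) ≠ 0 := inv_ne_zero hzne
    have hhwne : h z⁻¹ ≠ 0 := by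
      intro hzero; rw [hzero] at hlw; simp at hlw; linarith
    have hane : a z ≠ 0 := by
      intro hzero
      rw [hzero, mul_zero] at hgw
      exact (mul_ne_zero (pow_ne_zero k hwne) hhwne) hgw.symm
    refine ⟨hane, ?_⟩
    have hval : (a z)⁻¹ = z⁻¹ ^ n * (z⁻¹ ^ k * h z⁻¹)⁻¹ := by
      rw [← hgw, mul_inv, ← mul_assoc, mul_inv_cancel₀ (pow_ne_zero n hwne), one_mul]
    have habseq : ‖(a z)⁻¹‖
        = (‖z‖)⁻¹ ^ n * ((‖z‖)⁻¹ ^ k * ‖h z⁻¹‖)⁻¹ := by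
      rw [hval]; simp [norm_mul, norm_pow, norm_inv]
    rw [habseq]
    have e1 : (‖z‖)⁻¹ ^ n ≤ 1 := by
      apply pow_le_one₀ (by positivity)
      rw [inv_le_one_iff₀]; right; exact le_of_lt hz1
    have e2 : ((‖z‖)⁻¹ ^ k * ‖h z⁻¹‖)⁻¹
        ≤ ‖z‖ ^ k * c⁻¹ := by
      rw [mul_inv, inv_pow, inv_inv]
      exact mul_le_mul_of_nonneg_left (inv_anti₀ hcpos hlw) (by positivity)
    calc (‖z‖)⁻¹ ^ n * ((‖z‖)⁻¹ ^ k * ‖h z⁻¹‖)⁻¹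
        ≤ 1 * (‖z‖ ^ k * c⁻¹) :=
          mul_le_mul e1 e2 (by positivity) (by norm_num)
      _ = c⁻¹ * ‖z‖ ^ k := by ring
  refine ⟨fun z hz => (hkey z hz).1, max (max r δ⁻¹) 1,
    lt_of_lt_of_le one_pos (le_max_right _ _), fun z hz => ?_, k, c⁻¹,
    fun z hz => (hkey z hz).2⟩
  exact ((han z (mem_ann ((le_max_left _ _).trans (le_max_left _ _)) hz)).inv
    (hkey z (ann_lt hz)).1)

end RAIaux

/-- second part of Lemma 3.3: if `p'/p = d₀ q'/q + d₁` and
`q'' + ν₁ q' + ν₀ q = 0`, with all coefficients rational at infinity and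
`d₀ ≢ 0, 1`, then for any `e₀, e₁` rational at infinity there are `E₀, E₁, E₂`
rational at infinity with `E₂ ≢ 0` such that
`E₂ p''/p + E₁ p'/p + E₀ = (p'/p)² + e₁ p'/p + e₀`. -/
theorem second_order_relation_for_logderiv_related_pair
    (d₀ d₁ ν₀ ν₁ e₀ e₁ : ℂ → ℂ)
    (hd₀ : RationalAtInfinity d₀) (hd₁ : RationalAtInfinity d₁)
    (hν₀ : RationalAtInfinity ν₀) (hν₁ : RationalAtInfinity ν₁)
    (he₀ : RationalAtInfinity e₀) (he₁ : RationalAtInfinity e₁)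
    (hd₀ne0 : ∀ r : ℝ, ∃ z : ℂ, r < ‖z‖ ∧ d₀ z ≠ 0)
    (hd₀ne1 : ∀ r : ℝ, ∃ z : ℂ, r < ‖z‖ ∧ d₀ z ≠ 1) :
    ∃ E₀ E₁ E₂ : ℂ → ℂ,
      RationalAtInfinity E₀ ∧ RationalAtInfinity E₁ ∧ RationalAtInfinity E₂ ∧
      (∀ r : ℝ, ∃ z : ℂ, r < ‖z‖ ∧ E₂ z ≠ 0) ∧
      ∀ (r : ℝ) (U : Set ℂ), 0 < r → IsOpen U → IsConnected U →
        U ⊆ {z : ℂ | r < ‖z‖} →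
        AnalyticOnNhd ℂ d₀ U → AnalyticOnNhd ℂ d₁ U →
        AnalyticOnNhd ℂ ν₀ U → AnalyticOnNhd ℂ ν₁ U →
        AnalyticOnNhd ℂ e₀ U → AnalyticOnNhd ℂ e₁ U →
        AnalyticOnNhd ℂ E₀ U → AnalyticOnNhd ℂ E₁ U → AnalyticOnNhd ℂ E₂ U →
        (∀ z ∈ U, d₀ z ≠ 0) → (∀ z ∈ U, d₀ z ≠ 1) →
        ∀ p q : ℂ → ℂ, AnalyticOnNhd ℂ p U → AnalyticOnNhd ℂ q U →
        (∀ z ∈ U, p z ≠ 0) → (∀ z ∈ U, q z ≠ 0) →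
        (∀ z ∈ U, deriv p z / p z = d₀ z * (deriv q z / q z) + d₁ z) →
        (∀ z ∈ U, iteratedDeriv 2 q z + ν₁ z * deriv q z + ν₀ z * q z = 0) →
        ∀ z ∈ U,
          E₂ z * (iteratedDeriv 2 p z / p z) + E₁ z * (deriv p z / p z) + E₀ z
            = (deriv p z / p z) ^ 2 + e₁ z * (deriv p z / p z) + e₀ z := by
  classical
  obtain ⟨R₀, hR₀1, hzero₀, hinv₀⟩ := RAIaux.rai_inv hd₀ hd₀ne0
  have hd₀m1 : RationalAtInfinity (fun z => d₀ z - 1) :=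
    RAIaux.rai_sub hd₀ (RAIaux.rai_const 1)
  have hne1 : ∀ r : ℝ, ∃ z : ℂ, r < ‖z‖ ∧ d₀ z - 1 ≠ 0 := by
    intro r; obtain ⟨z, h1, h2⟩ := hd₀ne1 r; exact ⟨z, h1, sub_ne_zero.mpr h2⟩
  obtain ⟨R₁, hR₁1, hzero₁, hinv₁⟩ := RAIaux.rai_inv hd₀m1 hne1
  refine ⟨fun z => d₁ z * d₁ z + e₁ z * d₁ z + e₀ z
      - (d₀ z * (d₀ z - 1)⁻¹) * (deriv d₁ z + d₁ z * d₁ z - d₀ z * ν₀ z)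
      - (2 * d₁ z + e₁ z - (d₀ z * (d₀ z - 1)⁻¹)
          * (deriv d₀ z - d₀ z * ν₁ z + 2 * d₀ z * d₁ z) * (d₀ z)⁻¹) * d₁ z,
    fun z => 2 * d₁ z + e₁ z - (d₀ z * (d₀ z - 1)⁻¹)
      * (deriv d₀ z - d₀ z * ν₁ z + 2 * d₀ z * d₁ z) * (d₀ z)⁻¹,
    fun z => d₀ z * (d₀ z - 1)⁻¹, ?_, ?_, ?_, ?_, ?_⟩
  · -- RAI E₀
    have hE₂ : RationalAtInfinity (fun z => d₀ z * (d₀ z - 1)⁻¹) := RAIaux.rai_mul hd₀ hinv₁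
    have hE₁ : RationalAtInfinity (fun z => 2 * d₁ z + e₁ z - (d₀ z * (d₀ z - 1)⁻¹)
        * (deriv d₀ z - d₀ z * ν₁ z + 2 * d₀ z * d₁ z) * (d₀ z)⁻¹) :=
      RAIaux.rai_sub (RAIaux.rai_add (RAIaux.rai_mul (RAIaux.rai_const 2) hd₁) he₁)
        (RAIaux.rai_mul (RAIaux.rai_mul hE₂
          (RAIaux.rai_add (RAIaux.rai_sub (RAIaux.rai_deriv hd₀) (RAIaux.rai_mul hd₀ hν₁))
            (RAIaux.rai_mul (RAIaux.rai_mul (RAIaux.rai_const 2) hd₀) hd₁))) hinv₀)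
    exact RAIaux.rai_sub (RAIaux.rai_sub
      (RAIaux.rai_add (RAIaux.rai_add (RAIaux.rai_mul hd₁ hd₁) (RAIaux.rai_mul he₁ hd₁)) he₀)
      (RAIaux.rai_mul hE₂ (RAIaux.rai_sub (RAIaux.rai_add (RAIaux.rai_deriv hd₁)
        (RAIaux.rai_mul hd₁ hd₁)) (RAIaux.rai_mul hd₀ hν₀))))
      (RAIaux.rai_mul hE₁ hd₁)
  · -- RAI E₁
    have hE₂ : RationalAtInfinity (fun z => d₀ z * (d₀ z - 1)⁻¹) := RAIaux.rai_mul hd₀ hinv₁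
    exact RAIaux.rai_sub (RAIaux.rai_add (RAIaux.rai_mul (RAIaux.rai_const 2) hd₁) he₁)
      (RAIaux.rai_mul (RAIaux.rai_mul hE₂
        (RAIaux.rai_add (RAIaux.rai_sub (RAIaux.rai_deriv hd₀) (RAIaux.rai_mul hd₀ hν₁))
          (RAIaux.rai_mul (RAIaux.rai_mul (RAIaux.rai_const 2) hd₀) hd₁))) hinv₀)
  · -- RAI E₂
    exact RAIaux.rai_mul hd₀ hinv₁
  · -- E₂ often nonzero
    intro r
    refine ⟨((max r (max R₀ R₁) + 1 : ℝ) : ℂ), ?_, ?_⟩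
    · have h1 : (0:ℝ) ≤ max r (max R₀ R₁) + 1 := by
        have : (1:ℝ) ≤ R₀ := hR₀1
        have h2 : (0:ℝ) ≤ max r (max R₀ R₁) := le_trans (by linarith) ((le_max_left _ _).trans (le_max_right _ _))
        linarith
      rw [Complex.norm_real, Real.norm_of_nonneg h1]
      have := le_max_left r (max R₀ R₁); linarith
    · have h1 : (0:ℝ) ≤ max r (max R₀ R₁) + 1 := by
        have : (1:ℝ) ≤ R₀ := hR₀1
        have h2 : (0:ℝ) ≤ max r (max R₀ R₁) := le_trans (by linarith) ((le_max_left _ _).trans (le_max_right _ _))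
        linarith
      have habs : ‖((max r (max R₀ R₁) + 1 : ℝ) : ℂ)‖ = max r (max R₀ R₁) + 1 := by
        rw [Complex.norm_real, Real.norm_of_nonneg h1]
      have hz0 : d₀ ((max r (max R₀ R₁) + 1 : ℝ) : ℂ) ≠ 0 := by
        apply hzero₀; rw [habs]
        have := (le_max_left R₀ R₁).trans (le_max_right r (max R₀ R₁)); linarith
      have hz1 : d₀ ((max r (max R₀ R₁) + 1 : ℝ) : ℂ) - 1 ≠ 0 := by
        apply hzero₁; rw [habs]
        have := (le_max_right R₀ R₁).trans (le_max_right r (max R₀ R₁)); linarith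
      exact mul_ne_zero hz0 (inv_ne_zero hz1)
  · -- main identity
    intro r U hr hUopen hUconn hUsub hUd₀ hUd₁ hUν₀ hUν₁ hUe₀ hUe₁ hUE₀ hUE₁ hUE₂ hU0 hU1
      p q hp hq hp0 hq0 hrel hode z hz
    beta_reduce
    have hpz0 := hp0 z hz
    have hqz0 := hq0 z hz
    have ha := hU0 z hz
    have ha1 : d₀ z - 1 ≠ 0 := sub_ne_zero.mpr (hU1 z hz)
    have h2d : ∀ f : ℂ → ℂ, iteratedDeriv 2 f = deriv (deriv f) := by
      intro f
      rw [show (2:ℕ) = 1 + 1 from rfl, iteratedDeriv_succ, iteratedDeriv_one]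
    have hD2q : deriv (deriv q) z = -(ν₁ z * deriv q z) - ν₀ z * q z := by
      have := hode z hz
      rw [h2d q] at this
      linear_combination this
    have hEv : (fun w => deriv p w / p w) =ᶠ[nhds z]
        (fun w => d₀ w * (deriv q w / q w) + d₁ w) :=
      Filter.eventuallyEq_of_mem (hUopen.mem_nhds hz) (fun w hw => hrel w hw)
    have hEq := hEv.deriv_eq
    have hLqA : AnalyticAt ℂ (fun w => deriv q w / q w) z :=
      (hq.deriv z hz).div (hq z hz) hqz0
    rw [deriv_fun_div (hp.deriv z hz).differentiableAt (hp z hz).differentiableAt hpz0] at hEq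
    rw [deriv_fun_add (f := fun w => d₀ w * (deriv q w / q w)) (((hUd₀ z hz).differentiableAt).mul hLqA.differentiableAt)
      ((hUd₁ z hz).differentiableAt)] at hEq
    rw [deriv_fun_mul ((hUd₀ z hz).differentiableAt) hLqA.differentiableAt] at hEq
    rw [deriv_fun_div (hq.deriv z hz).differentiableAt (hq z hz).differentiableAt hqz0] at hEq
    obtain ⟨M, hM⟩ : ∃ M : ℂ, deriv q z = M * q z :=
      ⟨deriv q z / q z, (div_mul_cancel₀ _ hqz0).symm⟩
    obtain ⟨L, hL⟩ : ∃ L : ℂ, deriv p z = L * p z :=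
      ⟨deriv p z / p z, (div_mul_cancel₀ _ hpz0).symm⟩
    have hrelz := hrel z hz
    rw [hM, hL, mul_div_cancel_right₀ _ hpz0, mul_div_cancel_right₀ _ hqz0] at hrelz
    rw [hD2q, hM, hL] at hEq
    have hkey : deriv (deriv p) z * (p z * q z ^ 2)
        = ((L ^ 2 + deriv d₀ z * M + d₀ z * (-(ν₁ z * M) - ν₀ z - M ^ 2) + deriv d₁ z) * p z)
          * (p z * q z ^ 2) := by
      field_simp at hEq
      linear_combination (p z * q z ^ 2) * hEq
    have hD2p := mul_right_cancel₀ (mul_ne_zero hpz0 (pow_ne_zero 2 hqz0)) hkey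
    subst hrelz
    rw [h2d p, hD2p, hL]
    field_simp
    ring
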